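/- Let G be a finite simple connected graph of order n, size m, minimum degree δ and maximum degree Δ. Then AG(G) ≤ (1/(2δ))·√(F(G) + 2M₂(G) + 4m(m−1)Δ²), with equality if and only if G is regular. -/

import Mathlib

open SimpleGraph

/-- The degree of a vertex, as a natural number (classical, to avoid decidability assumptions). -/
noncomputable def ndeg {V : Type*} [Fintype V] (G : SimpleGraph V) (v : V) : ℕ :=
  letI := Classical.decRel G.Adj
  G.degree v

/-- The degree of a vertex, as a real number. -/
noncomputable def deg {V : Type*} [Fintype V] (G : SimpleGraph V) (v : V) : ℝ :=
  (ndeg G v : ℝ)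

/-- For a symmetric function `f`, `edgeSum G f = Σ_{uv ∈ E(G)} f (d_u) (d_v)`:
each unordered edge is counted twice in the double sum, hence the factor `1/2`. -/
noncomputable def edgeSum {V : Type*} [Fintype V] (G : SimpleGraph V) (f : ℝ → ℝ → ℝ) : ℝ :=
  letI := Classical.decRel G.Adj
  (1 / 2) * ∑ u : V, ∑ w : V, if G.Adj u w then f (deg G u) (deg G w) else 0

/-- The arithmetic-geometric index `AG(G) = Σ_{uv ∈ E(G)} (1/2)(√(d_u/d_v) + √(d_v/d_u))`. -/
noncomputable def AG {V : Type*} [Fintype V] (G : SimpleGraph V) : ℝ :=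
  edgeSum G (fun x y => (Real.sqrt (x / y) + Real.sqrt (y / x)) / 2)

/-- The first geometric-arithmetic index `GA(G) = Σ_{uv ∈ E(G)} 2√(d_u d_v)/(d_u + d_v)`. -/
noncomputable def GA {V : Type*} [Fintype V] (G : SimpleGraph V) : ℝ :=
  edgeSum G (fun x y => 2 * Real.sqrt (x * y) / (x + y))

/-- The forgotten index `F(G) = Σ_{uv ∈ E(G)} (d_u² + d_v²)`. -/
noncomputable def forgottenIndex {V : Type*} [Fintype V] (G : SimpleGraph V) : ℝ :=
  edgeSum G (fun x y => x ^ 2 + y ^ 2)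

/-- The first Zagreb index `M₁(G) = Σ_{uv ∈ E(G)} (d_u + d_v)`. -/
noncomputable def M1 {V : Type*} [Fintype V] (G : SimpleGraph V) : ℝ :=
  edgeSum G (fun x y => x + y)

/-- The second Zagreb index `M₂(G) = Σ_{uv ∈ E(G)} d_u d_v`. -/
noncomputable def M2 {V : Type*} [Fintype V] (G : SimpleGraph V) : ℝ :=
  edgeSum G (fun x y => x * y)

/-- The symmetric division deg index `SDD(G) = Σ_{uv ∈ E(G)} (d_u/d_v + d_v/d_u)`. -/
noncomputable def SDD {V : Type*} [Fintype V] (G : SimpleGraph V) : ℝ :=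
  edgeSum G (fun x y => x / y + y / x)

/-- The atom-bond connectivity index `ABC(G) = Σ_{uv ∈ E(G)} √((d_u + d_v − 2)/(d_u d_v))`. -/
noncomputable def ABC {V : Type*} [Fintype V] (G : SimpleGraph V) : ℝ :=
  edgeSum G (fun x y => Real.sqrt ((x + y - 2) / (x * y)))

/-- `G` is `(s,r)`-semiregular: its vertex set is the disjoint union of two nonempty sets,
all vertices of the first having degree `s` and all vertices of the second degree `r`. -/
def IsSemiregular {V : Type*} [Fintype V] (G : SimpleGraph V) (s r : ℕ) : Prop :=
  ∃ V₁ V₂ : Set V, V₁.Nonempty ∧ V₂.Nonempty ∧ Disjoint V₁ V₂ ∧ V₁ ∪ V₂ = Set.univ ∧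
    (∀ v ∈ V₁, ndeg G v = s) ∧ (∀ v ∈ V₂, ndeg G v = r)

noncomputable def DD {V : Type*} [Fintype V] (G : SimpleGraph V) : Finset (V × V) :=
  letI := Classical.decRel G.Adj
  Finset.univ.filter (fun p : V × V => G.Adj p.1 p.2)

lemma mem_DD {V : Type*} [Fintype V] {G : SimpleGraph V} {p : V × V} :
    p ∈ DD G ↔ G.Adj p.1 p.2 := by
  letI := Classical.decRel G.Adj
  simp [DD]

lemma edgeSum_eq {V : Type*} [Fintype V] (G : SimpleGraph V) (f : ℝ → ℝ → ℝ) :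
    edgeSum G f = (1 / 2) * ∑ p ∈ DD G, f (deg G p.1) (deg G p.2) := by
  letI := Classical.decRel G.Adj
  show (1 / 2) * (∑ u : V, ∑ w : V, if G.Adj u w then f (deg G u) (deg G w) else 0) = _
  congr 1
  rw [DD, Finset.sum_filter, ← Finset.univ_product_univ, Finset.sum_product]

lemma card_DD {V : Type*} [Fintype V] (G : SimpleGraph V) :
    (DD G).card = 2 * G.edgeSet.ncard := by
  letI := Classical.decRel G.Adj
  letI := Classical.decEq V
  have h1 : (DD G).card = ∑ u : V, G.degree u := by
    rw [DD, Finset.card_filter, ← Finset.univ_product_univ, Finset.sum_product]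
    refine Finset.sum_congr rfl fun u _ => ?_
    rw [SimpleGraph.degree, SimpleGraph.neighborFinset_eq_filter, Finset.card_filter]
  rw [h1, SimpleGraph.sum_degrees_eq_twice_card_edges, Set.ncard_eq_toFinset_card']
  congr 2

lemma sqrt_add_eq' {x y : ℝ} (hx : 0 < x) (hy : 0 < y) :
    Real.sqrt (x / y) + Real.sqrt (y / x) = (x + y) / (Real.sqrt x * Real.sqrt y) := by
  have hsx : 0 < Real.sqrt x := Real.sqrt_pos.2 hx
  have hsy : 0 < Real.sqrt y := Real.sqrt_pos.2 hy
  rw [Real.sqrt_div hx.le, Real.sqrt_div hy.le,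
    div_add_div _ _ hsy.ne' hsx.ne', Real.mul_self_sqrt hx.le, Real.mul_self_sqrt hy.le,
    mul_comm (Real.sqrt y)]

lemma keyA_le {c x y : ℝ} (hc : 0 < c) (hx : c ≤ x) (hy : c ≤ y) :
    (Real.sqrt (x / y) + Real.sqrt (y / x)) / 2 ≤ (x + y) / (2 * c) := by
  have hx0 : 0 < x := hc.trans_le hx
  have hy0 : 0 < y := hc.trans_le hy
  have hs : c ≤ Real.sqrt x * Real.sqrt y := by
    calc c = Real.sqrt c * Real.sqrt c := (Real.mul_self_sqrt hc.le).symm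
    _ ≤ Real.sqrt x * Real.sqrt y :=
      mul_le_mul (Real.sqrt_le_sqrt hx) (Real.sqrt_le_sqrt hy) (Real.sqrt_nonneg _)
        (Real.sqrt_nonneg _)
  rw [sqrt_add_eq' hx0 hy0, div_div, mul_comm (Real.sqrt x * Real.sqrt y) 2]
  gcongr

lemma keyA_eq {c x y : ℝ} (hc : 0 < c) (hx : c ≤ x) (hy : c ≤ y)
    (h : (Real.sqrt (x / y) + Real.sqrt (y / x)) / 2 = (x + y) / (2 * c)) :
    x = c ∧ y = c := by
  have hx0 : 0 < x := hc.trans_le hx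
  have hy0 : 0 < y := hc.trans_le hy
  have hsx : 0 < Real.sqrt x := Real.sqrt_pos.2 hx0
  have hsy : 0 < Real.sqrt y := Real.sqrt_pos.2 hy0
  rw [sqrt_add_eq' hx0 hy0, div_div,
    div_eq_div_iff (by positivity) (by positivity)] at h
  have hxy : 0 < x + y := by linarith
  have h2 : Real.sqrt x * Real.sqrt y * 2 = 2 * c := (mul_left_cancel₀ hxy.ne' h).symm
  have h3 : Real.sqrt x * Real.sqrt y = c := by linarith
  have h4 : x * y = c * c := by
    have : (Real.sqrt x * Real.sqrt y) * (Real.sqrt x * Real.sqrt y) = x * y := by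
      rw [mul_mul_mul_comm, Real.mul_self_sqrt hx0.le, Real.mul_self_sqrt hy0.le]
    rw [← this, h3]
  constructor
  · nlinarith [mul_nonneg (sub_nonneg.2 hx) (sub_nonneg.2 hy)]
  · nlinarith [mul_nonneg (sub_nonneg.2 hx) (sub_nonneg.2 hy)]


/-- Corollary 2 of the paper. -/
theorem stmt3 {V : Type*} [Fintype V] (G : SimpleGraph V) (hG : G.Connected)
    (n m δ Δ : ℕ)
    (hn : Fintype.card V = n) (hm : G.edgeSet.ncard = m)
    (hδ : IsLeast (Set.range (ndeg G)) δ)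
    (hΔ : IsGreatest (Set.range (ndeg G)) Δ) :
    AG G ≤ (1 / (2 * (δ : ℝ))) *
      Real.sqrt (forgottenIndex G + 2 * M2 G + 4 * (m : ℝ) * ((m : ℝ) - 1) * (Δ : ℝ) ^ 2) ∧
    (AG G = (1 / (2 * (δ : ℝ))) *
      Real.sqrt (forgottenIndex G + 2 * M2 G + 4 * (m : ℝ) * ((m : ℝ) - 1) * (Δ : ℝ) ^ 2) ↔
      ∃ r, ∀ v : V, ndeg G v = r) := by
  letI := Classical.decRel G.Adj
  letI := Classical.decEq V
  have hdle : ∀ v : V, (δ : ℝ) ≤ deg G v := fun v =>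
    Nat.cast_le.mpr (hδ.2 (Set.mem_range_self v))
  have hdge : ∀ v : V, deg G v ≤ (Δ : ℝ) := fun v =>
    Nat.cast_le.mpr (hΔ.2 (Set.mem_range_self v))
  have hDcard : (DD G).card = 2 * m := by rw [card_DD, hm]
  have hAGe : AG G = (1 / 2) * ∑ p ∈ DD G,
      (Real.sqrt (deg G p.1 / deg G p.2) + Real.sqrt (deg G p.2 / deg G p.1)) / 2 :=
    edgeSum_eq G _
  have hFe : forgottenIndex G = (1 / 2) * ∑ p ∈ DD G, (deg G p.1 ^ 2 + deg G p.2 ^ 2) :=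
    edgeSum_eq G _
  have hM2e : M2 G = (1 / 2) * ∑ p ∈ DD G, deg G p.1 * deg G p.2 := edgeSum_eq G _
  have hM1v : M1 G = (1 / 2) * ∑ p ∈ DD G, (deg G p.1 + deg G p.2) := edgeSum_eq G _
  rcases Nat.eq_zero_or_pos δ with h0 | hpos
  · -- degenerate case: δ = 0, so G is a single vertex
    subst h0
    obtain ⟨v, hv⟩ := hδ.1
    have hvdeg : G.degree v = 0 := hv
    have hvadj : ∀ u, ¬ G.Adj v u := by
      intro u hu
      have h1 : 0 < G.degree v := (G.degree_pos_iff_exists_adj v).2 ⟨u, hu⟩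
      omega
    have hall : ∀ u, u = v := by
      intro u
      obtain ⟨p⟩ := hG.preconnected v u
      cases p with
      | nil => rfl
      | cons h q => exact absurd h (hvadj _)
    have hDempty : DD G = ∅ := by
      rw [Finset.eq_empty_iff_forall_notMem]
      intro p hp
      have h2 := mem_DD.1 hp
      rw [hall p.1, hall p.2] at h2
      exact h2.ne rfl
    have heq : AG G = (1 / (2 * ((0 : ℕ) : ℝ))) *
        Real.sqrt (forgottenIndex G + 2 * M2 G +
          4 * (m : ℝ) * ((m : ℝ) - 1) * (Δ : ℝ) ^ 2) := by
      rw [hAGe, hDempty]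
      norm_num
    exact ⟨le_of_eq heq, fun _ => ⟨0, fun u => by rw [hall u]; exact hv⟩, fun _ => heq⟩
  · have hδR : (0 : ℝ) < (δ : ℝ) := by exact_mod_cast hpos
    have hdpos : ∀ v : V, 0 < deg G v := fun v => lt_of_lt_of_le hδR (hdle v)
    have hper : ∀ p ∈ DD G,
        (Real.sqrt (deg G p.1 / deg G p.2) + Real.sqrt (deg G p.2 / deg G p.1)) / 2 ≤
          (deg G p.1 + deg G p.2) / (2 * (δ : ℝ)) :=
      fun p _ => keyA_le hδR (hdle p.1) (hdle p.2)
    have hM1eq : (1 / (2 * (δ : ℝ))) * M1 G =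
        (1 / 2) * ∑ p ∈ DD G, (deg G p.1 + deg G p.2) / (2 * (δ : ℝ)) := by
      rw [hM1v, Finset.mul_sum, Finset.mul_sum, Finset.mul_sum]
      exact Finset.sum_congr rfl fun p _ => by ring
    have hA : AG G ≤ (1 / (2 * (δ : ℝ))) * M1 G := by
      rw [hAGe, hM1eq]
      exact mul_le_mul_of_nonneg_left (Finset.sum_le_sum hper) (by norm_num)
    have hsle : ∀ p ∈ DD G, deg G p.1 + deg G p.2 ≤ 2 * (Δ : ℝ) := fun p _ => by
      have := hdge p.1; have := hdge p.2; linarith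
    have hsnn : ∀ p : V × V, 0 ≤ deg G p.1 + deg G p.2 := fun p => by
      have := (hdpos p.1).le; have := (hdpos p.2).le; linarith
    have key : (∑ p ∈ DD G, (deg G p.1 + deg G p.2)) ^ 2 ≤
        2 * (∑ p ∈ DD G, (deg G p.1 + deg G p.2) ^ 2) +
          (2 * (m : ℝ)) * ((2 * (m : ℝ) - 2) * (2 * (Δ : ℝ)) ^ 2) := by
      rw [sq, Finset.sum_mul_sum]
      have hinner : ∀ p ∈ DD G,
          (∑ q ∈ DD G, (deg G p.1 + deg G p.2) * (deg G q.1 + deg G q.2)) ≤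
            2 * (deg G p.1 + deg G p.2) ^ 2 + (2 * (m : ℝ) - 2) * (2 * (Δ : ℝ)) ^ 2 := by
        intro p hp
        have hpadj : G.Adj p.1 p.2 := mem_DD.1 hp
        have hswapD : p.swap ∈ DD G := mem_DD.2 hpadj.symm
        have hswapne : p.swap ≠ p := fun h => hpadj.ne' (congrArg Prod.fst h)
        have h1 : p.swap ∈ (DD G).erase p := Finset.mem_erase.2 ⟨hswapne, hswapD⟩
        rw [← Finset.add_sum_erase _ _ hp, ← Finset.add_sum_erase _ _ h1]
        have hsswap : deg G p.swap.1 + deg G p.swap.2 = deg G p.1 + deg G p.2 := add_comm _ _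
        have hrest : ∑ q ∈ ((DD G).erase p).erase p.swap,
            (deg G p.1 + deg G p.2) * (deg G q.1 + deg G q.2) ≤
              (2 * (m : ℝ) - 2) * (2 * (Δ : ℝ)) ^ 2 := by
          have hb : ∀ q ∈ ((DD G).erase p).erase p.swap,
              (deg G p.1 + deg G p.2) * (deg G q.1 + deg G q.2) ≤ (2 * (Δ : ℝ)) ^ 2 := by
            intro q hq
            have hq' : q ∈ DD G := Finset.mem_of_mem_erase (Finset.mem_of_mem_erase hq)
            have h5 := hsle p hp
            have h6 := hsle q hq'
            nlinarith [hsnn p, hsnn q]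
          have hcard : (((DD G).erase p).erase p.swap).card = 2 * m - 2 := by
            rw [Finset.card_erase_of_mem h1, Finset.card_erase_of_mem hp, hDcard]
            omega
          have hm1 : 1 ≤ m := by
            have h7 : 0 < (DD G).card := Finset.card_pos.2 ⟨p, hp⟩
            omega
          calc ∑ q ∈ ((DD G).erase p).erase p.swap,
              (deg G p.1 + deg G p.2) * (deg G q.1 + deg G q.2) ≤
                (((DD G).erase p).erase p.swap).card • (2 * (Δ : ℝ)) ^ 2 :=
              Finset.sum_le_card_nsmul _ _ _ hb
          _ = ((2 * m - 2 : ℕ) : ℝ) * (2 * (Δ : ℝ)) ^ 2 := by rw [hcard, nsmul_eq_mul]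
          _ = (2 * (m : ℝ) - 2) * (2 * (Δ : ℝ)) ^ 2 := by
              rw [Nat.cast_sub (by omega)]; push_cast; ring
        rw [hsswap]
        nlinarith [hrest]
      calc ∑ p ∈ DD G, ∑ q ∈ DD G, (deg G p.1 + deg G p.2) * (deg G q.1 + deg G q.2) ≤
          ∑ p ∈ DD G, (2 * (deg G p.1 + deg G p.2) ^ 2 +
            (2 * (m : ℝ) - 2) * (2 * (Δ : ℝ)) ^ 2) := Finset.sum_le_sum hinner
      _ = 2 * (∑ p ∈ DD G, (deg G p.1 + deg G p.2) ^ 2) +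
            (2 * (m : ℝ)) * ((2 * (m : ℝ) - 2) * (2 * (Δ : ℝ)) ^ 2) := by
          rw [Finset.sum_add_distrib, Finset.sum_const, ← Finset.mul_sum, nsmul_eq_mul, hDcard]
          push_cast; ring
    have hFM : ∑ p ∈ DD G, (deg G p.1 + deg G p.2) ^ 2 =
        2 * forgottenIndex G + 4 * M2 G := by
      have e1 : ∑ p ∈ DD G, (deg G p.1 + deg G p.2) ^ 2 =
          ∑ p ∈ DD G, ((deg G p.1 ^ 2 + deg G p.2 ^ 2) + 2 * (deg G p.1 * deg G p.2)) :=
        Finset.sum_congr rfl fun p _ => by ring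
      rw [e1, Finset.sum_add_distrib, ← Finset.mul_sum, hFe, hM2e]
      ring
    have hM1nn : 0 ≤ M1 G := by
      rw [hM1v]
      exact mul_nonneg (by norm_num) (Finset.sum_nonneg fun p _ => hsnn p)
    have hBsq : (M1 G) ^ 2 ≤ forgottenIndex G + 2 * M2 G +
        4 * (m : ℝ) * ((m : ℝ) - 1) * (Δ : ℝ) ^ 2 := by
      rw [hFM] at key
      calc (M1 G) ^ 2 = (1 / 4) * ((2 * M1 G) ^ 2) := by ring
      _ ≤ (1 / 4) * (2 * (2 * forgottenIndex G + 4 * M2 G) +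
            (2 * (m : ℝ)) * ((2 * (m : ℝ) - 2) * (2 * (Δ : ℝ)) ^ 2)) := by
          have h8 : 2 * M1 G = ∑ p ∈ DD G, (deg G p.1 + deg G p.2) := by rw [hM1v]; ring
          rw [h8]
          exact mul_le_mul_of_nonneg_left key (by norm_num)
      _ = forgottenIndex G + 2 * M2 G + 4 * (m : ℝ) * ((m : ℝ) - 1) * (Δ : ℝ) ^ 2 := by ring
    have hB : M1 G ≤ Real.sqrt (forgottenIndex G + 2 * M2 G +
        4 * (m : ℝ) * ((m : ℝ) - 1) * (Δ : ℝ) ^ 2) := by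
      rw [show M1 G = Real.sqrt ((M1 G) ^ 2) from (Real.sqrt_sq hM1nn).symm]
      exact Real.sqrt_le_sqrt hBsq
    have hc0 : (0 : ℝ) ≤ 1 / (2 * (δ : ℝ)) := by positivity
    have hineq : AG G ≤ (1 / (2 * (δ : ℝ))) * Real.sqrt (forgottenIndex G + 2 * M2 G +
        4 * (m : ℝ) * ((m : ℝ) - 1) * (Δ : ℝ) ^ 2) :=
      hA.trans (mul_le_mul_of_nonneg_left hB hc0)
    refine ⟨hineq, ?_, ?_⟩
    · intro heq
      have hAeq : AG G = (1 / (2 * (δ : ℝ))) * M1 G :=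
        le_antisymm hA (by rw [heq]; exact mul_le_mul_of_nonneg_left hB hc0)
      rw [hAGe, hM1eq] at hAeq
      have hsum := mul_left_cancel₀ (by norm_num : (1 / 2 : ℝ) ≠ 0) hAeq
      have hterm := (Finset.sum_eq_sum_iff_of_le hper).1 hsum
      refine ⟨δ, fun v => ?_⟩
      have hv1 : 0 < G.degree v := by
        have h2 : δ ≤ ndeg G v := hδ.2 (Set.mem_range_self v)
        have h3 : δ ≤ G.degree v := h2
        omega
      obtain ⟨w, hw⟩ := (G.degree_pos_iff_exists_adj v).1 hv1
      have hpD : ((v, w) : V × V) ∈ DD G := mem_DD.2 hw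
      have h9 := (keyA_eq hδR (hdle (v, w).1) (hdle (v, w).2) (hterm _ hpD)).1
      exact Nat.cast_injective h9
    · rintro ⟨r, hr⟩
      obtain ⟨v, hv⟩ := hδ.1
      have hδr : δ = r := by rw [← hv]; exact hr v
      obtain ⟨v', hv'⟩ := hΔ.1
      have hΔδ : Δ = δ := by rw [← hv', hr v', hδr]
      rw [hΔδ]
      have hdr : ∀ u, deg G u = (δ : ℝ) := fun u =>
        congrArg (fun k : ℕ => (k : ℝ)) (by rw [hr u, hδr])
      have hAGv : AG G = (m : ℝ) := by
        rw [hAGe]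
        have h10 : ∀ p ∈ DD G,
            (Real.sqrt (deg G p.1 / deg G p.2) + Real.sqrt (deg G p.2 / deg G p.1)) / 2 = 1 := by
          intro p _
          rw [hdr, hdr, div_self hδR.ne', Real.sqrt_one]
          norm_num
        rw [Finset.sum_congr rfl h10, Finset.sum_const, nsmul_eq_mul, hDcard]
        push_cast; ring
      have hFv : forgottenIndex G = 2 * (m : ℝ) * (δ : ℝ) ^ 2 := by
        rw [hFe]
        have h11 : ∀ p ∈ DD G, deg G p.1 ^ 2 + deg G p.2 ^ 2 = 2 * (δ : ℝ) ^ 2 := by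
          intro p _; rw [hdr, hdr]; ring
        rw [Finset.sum_congr rfl h11, Finset.sum_const, nsmul_eq_mul, hDcard]
        push_cast; ring
      have hM2v : M2 G = (m : ℝ) * (δ : ℝ) ^ 2 := by
        rw [hM2e]
        have h12 : ∀ p ∈ DD G, deg G p.1 * deg G p.2 = (δ : ℝ) ^ 2 := by
          intro p _; rw [hdr, hdr]; ring
        rw [Finset.sum_congr rfl h12, Finset.sum_const, nsmul_eq_mul, hDcard]
        push_cast; ring
      rw [hAGv, hFv, hM2v]
      have h13 : 2 * (m : ℝ) * (δ : ℝ) ^ 2 + 2 * ((m : ℝ) * (δ : ℝ) ^ 2) +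
          4 * (m : ℝ) * ((m : ℝ) - 1) * (δ : ℝ) ^ 2 = (2 * (m : ℝ) * (δ : ℝ)) ^ 2 := by ring
      rw [h13, Real.sqrt_sq (by positivity)]
      field_simp
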